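/- Let p ≥ 1, let P(y) = y^p + Σ_{0≤h≤p−1} c_h·y^h ∈ ℝ[y] be monic of degree p, let 0 ≤ q ≤ p−1 and let t₁, t₂ ∈ ℝ. Suppose P^{(q)}(t₁) = 0, P^{(q)}(t₂) = 0, and for every k with q+1 ≤ k ≤ p−1, sign(P^{(k)}(t₁)) = sign(P^{(k)}(t₂)) and these common signs are nonzero. Then t₁ ≤ t₂. -/
import Mathlib


open Polynomial

/-- Semantic content of Lemma `lem:eq_thom_enc_eq_root`: if `t₁, t₂` are both
roots of `P^{(q)}` and the signs of `P^{(k)}(t₁)` and `P^{(k)}(t₂)` agree and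
are nonzero for all `q+1 ≤ k ≤ p-1`, where `P` is monic of degree `p ≥ 1`,
then `t₁ ≤ t₂`. -/
theorem thom_same_encoding_le (p : ℕ) (hp : 1 ≤ p) (P : Polynomial ℝ)
    (hmon : P.Monic) (hdeg : P.natDegree = p)
    (q : ℕ) (hq : q ≤ p - 1) (t₁ t₂ : ℝ)
    (h₁ : (Polynomial.derivative^[q] P).eval t₁ = 0)
    (h₂ : (Polynomial.derivative^[q] P).eval t₂ = 0)
    (hsame : ∀ k, q + 1 ≤ k → k ≤ p - 1 →
      SignType.sign ((Polynomial.derivative^[k] P).eval t₁) =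
        SignType.sign ((Polynomial.derivative^[k] P).eval t₂) ∧
      SignType.sign ((Polynomial.derivative^[k] P).eval t₁) ≠ 0) :
    t₁ ≤ t₂ := by
  by_contra hlt
  push_neg at hlt
  -- hlt : t₂ < t₁
  have hq1p : q + 1 ≤ p := by omega
  -- Key claim: all derivatives of order between q+1 and p are nonzero on [t₂, t₁].
  have key : ∀ d k, k + d = p → q + 1 ≤ k →
      ∀ x ∈ Set.Icc t₂ t₁, (Polynomial.derivative^[k] P).eval x ≠ 0 := by
    intro d
    induction d with
    | zero =>
      intro k hk _ x _
      have hk' : k = p := by omega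
      -- derivative^[k] P is a nonzero constant
      have hdeg0 : (Polynomial.derivative^[k] P).natDegree = 0 := by
        have := Polynomial.natDegree_iterate_derivative P k
        omega
      obtain ⟨a, ha⟩ := Polynomial.natDegree_eq_zero.mp hdeg0
      have hcoeff : (Polynomial.derivative^[k] P).coeff 0 =
          (0 + k).descFactorial k • P.coeff (0 + k) := Polynomial.coeff_iterate_derivative P 0
      have hlead : P.coeff k = 1 := by
        rw [hk', ← hdeg]
        exact hmon.coeff_natDegree
      have ha0 : a ≠ 0 := by
        have haeq : a = (k.descFactorial k : ℝ) := by
          have := hcoeff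
          rw [← ha, Polynomial.coeff_C_zero, zero_add, hlead] at this
          simpa using this
        rw [haeq, Nat.descFactorial_self]
        exact_mod_cast Nat.factorial_ne_zero k
      rw [← ha, Polynomial.eval_C]
      exact ha0
    | succ d ih =>
      intro k hk hkq x hx
      have hkp : k < p := by omega
      have ih' := ih (k + 1) (by omega) (by omega)
      -- derivative^[k+1] P has constant sign on [t₂, t₁] by IVT
      have hcont : ContinuousOn (fun y => (Polynomial.derivative^[k+1] P).eval y)
          (Set.Icc t₂ t₁) := (Polynomial.continuous _).continuousOn
      have hsign : (∀ y ∈ Set.Icc t₂ t₁, 0 < (Polynomial.derivative^[k+1] P).eval y) ∨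
          (∀ y ∈ Set.Icc t₂ t₁, (Polynomial.derivative^[k+1] P).eval y < 0) := by
        rcases lt_or_gt_of_ne (ih' t₂ (Set.left_mem_Icc.mpr hlt.le)) with hpos | hneg
        · right
          intro y hy
          by_contra hy0
          push_neg at hy0
          have hy0' : 0 < (Polynomial.derivative^[k+1] P).eval y :=
            lt_of_le_of_ne hy0 (Ne.symm (ih' y hy))
          -- IVT between t₂ and y
          have hsub : Set.Icc t₂ y ⊆ Set.Icc t₂ t₁ := Set.Icc_subset_Icc le_rfl hy.2
          obtain ⟨c, hc, hc0⟩ := intermediate_value_Icc hy.1 (hcont.mono hsub)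
            (Set.mem_Icc.mpr ⟨hpos.le, hy0'.le⟩)
          exact ih' c (hsub hc) hc0
        · left
          intro y hy
          by_contra hy0
          push_neg at hy0
          have hy0' : (Polynomial.derivative^[k+1] P).eval y < 0 :=
            lt_of_le_of_ne hy0 (ih' y hy)
          have hsub : Set.Icc t₂ y ⊆ Set.Icc t₂ t₁ := Set.Icc_subset_Icc le_rfl hy.2
          obtain ⟨c, hc, hc0⟩ := intermediate_value_Icc' hy.1 (hcont.mono hsub)
            (Set.mem_Icc.mpr ⟨hy0'.le, hneg.le⟩)
          exact ih' c (hsub hc) hc0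
      -- deriv of eval of derivative^[k] P
      have hderiv : ∀ y, deriv (fun z => (Polynomial.derivative^[k] P).eval z) y =
          (Polynomial.derivative^[k+1] P).eval y := by
        intro y
        rw [Polynomial.deriv, Function.iterate_succ_apply']
      -- derivative^[k] P is strictly monotone or strictly anti on [t₂, t₁]
      have hmono : StrictMonoOn (fun z => (Polynomial.derivative^[k] P).eval z) (Set.Icc t₂ t₁) ∨
          StrictAntiOn (fun z => (Polynomial.derivative^[k] P).eval z) (Set.Icc t₂ t₁) := by
        rcases hsign with hpos | hneg
        · left
          refine strictMonoOn_of_deriv_pos (convex_Icc t₂ t₁)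
            (Polynomial.continuous _).continuousOn ?_
          intro y hy
          rw [hderiv]
          exact hpos y (interior_subset hy)
        · right
          refine strictAntiOn_of_deriv_neg (convex_Icc t₂ t₁)
            (Polynomial.continuous _).continuousOn ?_
          intro y hy
          rw [hderiv]
          exact hneg y (interior_subset hy)
      obtain ⟨hseq, hsne⟩ := hsame k hkq (by omega)
      set f := fun z => (Polynomial.derivative^[k] P).eval z with hf
      have ht2 : t₂ ∈ Set.Icc t₂ t₁ := Set.left_mem_Icc.mpr hlt.le
      have ht1 : t₁ ∈ Set.Icc t₂ t₁ := Set.right_mem_Icc.mpr hlt.le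
      -- f t₁ and f t₂ have the same nonzero sign; f is strictly monotone on the interval,
      -- so f x lies between them and is nonzero.
      have hbetween : (f t₂ ≤ f x ∧ f x ≤ f t₁) ∨ (f t₁ ≤ f x ∧ f x ≤ f t₂) := by
        rcases hmono with hm | ha
        · left
          exact ⟨hm.monotoneOn ht2 hx hx.1, hm.monotoneOn hx ht1 hx.2⟩
        · right
          exact ⟨ha.antitoneOn hx ht1 hx.2, ha.antitoneOn ht2 hx hx.1⟩
      rcases lt_trichotomy (f t₁) 0 with h1 | h1 | h1
      · -- both negative
        have hs1 : SignType.sign (f t₁) = -1 := sign_eq_neg_one_iff.mpr h1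
        have h2 : f t₂ < 0 := sign_eq_neg_one_iff.mp (hseq.symm.trans hs1)
        rcases hbetween with ⟨_, hb⟩ | ⟨_, hb⟩
        · exact ne_of_lt (lt_of_le_of_lt hb h1)
        · exact ne_of_lt (lt_of_le_of_lt hb h2)
      · exact (hsne (sign_eq_zero_iff.mpr h1)).elim
      · -- both positive
        have hs1 : SignType.sign (f t₁) = 1 := sign_eq_one_iff.mpr h1
        have h2 : 0 < f t₂ := sign_eq_one_iff.mp (hseq.symm.trans hs1)
        rcases hbetween with ⟨hb, _⟩ | ⟨hb, _⟩
        · exact ne_of_gt (lt_of_lt_of_le h2 hb)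
        · exact ne_of_gt (lt_of_lt_of_le h1 hb)
  -- Rolle: P^{(q)} vanishes at t₂ and t₁, so P^{(q+1)} has a root in (t₂, t₁)
  obtain ⟨c, hc, hc0⟩ := exists_deriv_eq_zero (f := fun z => (Polynomial.derivative^[q] P).eval z)
    hlt (Polynomial.continuous _).continuousOn (h₂.trans h₁.symm)
  rw [Polynomial.deriv] at hc0
  rw [← Function.iterate_succ_apply' Polynomial.derivative q P] at hc0
  exact key (p - (q + 1)) (q + 1) (by omega) le_rfl c (Set.mem_Icc_of_Ioo hc) hc0
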